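/- Let U be a unitary operator on a Hilbert space H and for Im μ ≠ 0 set R(μ) := (Ue^{−iμ} − 1)^{−1}. Then for all λ ∈ R and ε ∈ R with ε ≠ 0: R(λ+iε) − R(λ−iε) = (1 − e^{−2ε}) R(λ−iε)* R(λ−iε). In particular, if ε > 0 then R(λ+iε) − R(λ−iε) is a nonnegative self-adjoint operator. -/

import Mathlib

noncomputable section

open Complex

namespace KS

variable {H : Type*} [NormedAddCommGroup H] [InnerProductSpace ℂ H] [CompleteSpace H]

/-- `Res` is the resolvent family of the unitary `U`:
for `Im μ ≠ 0`, `Res μ = (Ue^{−iμ} − 1)⁻¹`. -/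
def IsResolventFamily (U : H ≃ₗᵢ[ℂ] H) (Res : ℂ → H →L[ℂ] H) : Prop :=
  ∀ μ : ℂ, μ.im ≠ 0 →
    (∀ φ : H, Complex.exp (-μ * Complex.I) • U (Res μ φ) - Res μ φ = φ) ∧
    (∀ φ : H, Res μ (Complex.exp (-μ * Complex.I) • U φ - φ) = φ)

end KS

section Aux

local notation "⟪" x ", " y "⟫" => @inner ℂ _ _ x y

lemma key_inner_aux {H : Type*} [NormedAddCommGroup H] [InnerProductSpace ℂ H]
    (U : H ≃ₗᵢ[ℂ] H) (A B : H →L[ℂ] H) (c d : ℂ)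
    (hcd : (starRingEnd ℂ) c * d = 1)
    (hA : ∀ φ : H, d • U (A φ) - A φ = φ)
    (hB : ∀ φ : H, c • U (B φ) - B φ = φ)
    (ψ φ : H) :
    ⟪ψ, A φ - B φ⟫ = (1 - (starRingEnd ℂ) c * c) * ⟪B ψ, B φ⟫ := by
  set x := B φ with hx
  set y := B ψ with hy
  set z := A φ with hz
  have hφ : c • U x - x = φ := hB φ
  have hψ : c • U y - y = ψ := hB ψ
  have hφ' : d • U z - z = φ := hA φ
  have e1 : ⟪U y, φ⟫ = d * ⟪y, z⟫ - ⟪U y, z⟫ := by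
    rw [← hφ', inner_sub_right, inner_smul_right, U.inner_map_map]
  have e2 : ⟪U y, φ⟫ = c * ⟪y, x⟫ - ⟪U y, x⟫ := by
    rw [← hφ, inner_sub_right, inner_smul_right, U.inner_map_map]
  have e3 : ⟪ψ, z - x⟫ = (starRingEnd ℂ) c * (⟪U y, z⟫ - ⟪U y, x⟫) - (⟪y, z⟫ - ⟪y, x⟫) := by
    rw [← hψ]
    simp [inner_sub_left, inner_sub_right, inner_smul_left]
    ring
  calc ⟪ψ, A φ - B φ⟫ = ⟪ψ, z - x⟫ := rfl
    _ = (1 - (starRingEnd ℂ) c * c) * ⟪y, x⟫ := by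
        rw [e3]
        have : ⟪U y, z⟫ - ⟪U y, x⟫ = d * ⟪y, z⟫ - c * ⟪y, x⟫ := by
          linear_combination e1 - e2
        rw [this]
        linear_combination (⟪y, z⟫ : ℂ) * hcd

end Aux

open KS in
/-- **Lemma (resolvent difference identity and positivity).**
Let `U` be unitary on a Hilbert space `H`, `R(μ) = (Ue^{−iμ} − 1)⁻¹` for `Im μ ≠ 0`.
Then for `λ ∈ ℝ`, `ε ≠ 0`:
`R(λ+iε) − R(λ−iε) = (1 − e^{−2ε}) R(λ−iε)* R(λ−iε)`;
in particular for `ε > 0` the operator `R(λ+iε) − R(λ−iε)` is self-adjoint and nonnegative. -/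
theorem resolvent_difference_identity
    {H : Type*} [NormedAddCommGroup H] [InnerProductSpace ℂ H] [CompleteSpace H]
    (U : H ≃ₗᵢ[ℂ] H) (Res : ℂ → H →L[ℂ] H) (hRes : KS.IsResolventFamily U Res) :
    ∀ (l ε : ℝ), ε ≠ 0 →
      (Res ((l : ℂ) + (ε : ℂ) * Complex.I) - Res ((l : ℂ) - (ε : ℂ) * Complex.I) =
        (((1 - Real.exp (-2 * ε) : ℝ)) : ℂ) •
          (ContinuousLinearMap.adjoint (Res ((l : ℂ) - (ε : ℂ) * Complex.I)) ∘L
            Res ((l : ℂ) - (ε : ℂ) * Complex.I))) ∧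
      (0 < ε →
        IsSelfAdjoint
          (Res ((l : ℂ) + (ε : ℂ) * Complex.I) - Res ((l : ℂ) - (ε : ℂ) * Complex.I)) ∧
        ∀ φ : H, 0 ≤ (inner ℂ φ
          ((Res ((l : ℂ) + (ε : ℂ) * Complex.I) - Res ((l : ℂ) - (ε : ℂ) * Complex.I)) φ)
            : ℂ).re) := by
  intro l ε hε
  set μp : ℂ := (l : ℂ) + (ε : ℂ) * Complex.I with hμp
  set μm : ℂ := (l : ℂ) - (ε : ℂ) * Complex.I with hμm
  have himp : μp.im ≠ 0 := by simp [hμp, hε]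
  have himm : μm.im ≠ 0 := by simp [hμm, hε]
  set A := Res μp with hA
  set B := Res μm with hB
  set c : ℂ := Complex.exp (-μm * Complex.I) with hc
  set d : ℂ := Complex.exp (-μp * Complex.I) with hd
  have hAφ : ∀ φ : H, d • U (A φ) - A φ = φ := (hRes μp himp).1
  have hBφ : ∀ φ : H, c • U (B φ) - B φ = φ := (hRes μm himm).1
  have hconjc : (starRingEnd ℂ) c = Complex.exp ((l : ℂ) * Complex.I - (ε : ℂ)) := by
    rw [hc, ← Complex.exp_conj]
    congr 1
    simp [hμm, map_mul, map_sub, map_add, Complex.conj_I, Complex.conj_ofReal]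
    ring_nf
    rw [Complex.I_sq]
    ring
  have hcd : (starRingEnd ℂ) c * d = 1 := by
    rw [hconjc, hd, ← Complex.exp_add, hμp]
    rw [show (l : ℂ) * Complex.I - (ε : ℂ) + -((l : ℂ) + (ε : ℂ) * Complex.I) * Complex.I
        = 0 by linear_combination (-(ε : ℂ)) * Complex.I_sq]
    exact Complex.exp_zero
  have hcc : (starRingEnd ℂ) c * c = (Real.exp (-2 * ε) : ℂ) := by
    rw [hconjc, hc, ← Complex.exp_add, Complex.ofReal_exp]
    congr 1
    rw [hμm]
    push_cast
    linear_combination (ε : ℂ) * Complex.I_sq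
  have hr : ((1 - Real.exp (-2 * ε) : ℝ) : ℂ) = 1 - (starRingEnd ℂ) c * c := by
    rw [hcc]; push_cast; ring
  have key : ∀ ψ φ : H, (inner ℂ ψ (A φ - B φ) : ℂ)
      = ((1 - Real.exp (-2 * ε) : ℝ) : ℂ) * inner ℂ (B ψ) (B φ) := by
    intro ψ φ
    rw [hr]
    exact key_inner_aux U A B c d hcd hAφ hBφ ψ φ
  have hmain : A - B = ((1 - Real.exp (-2 * ε) : ℝ) : ℂ) •
      (ContinuousLinearMap.adjoint B ∘L B) := by
    ext φ
    apply ext_inner_left ℂ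
    intro ψ
    rw [ContinuousLinearMap.sub_apply]
    rw [key ψ φ]
    simp only [ContinuousLinearMap.smul_apply, ContinuousLinearMap.comp_apply,
      inner_smul_right, ContinuousLinearMap.adjoint_inner_right]
  refine ⟨hmain, fun hεpos => ?_⟩
  have hle : Real.exp (-2 * ε) ≤ 1 := by
    rw [Real.exp_le_one_iff]; nlinarith
  constructor
  · rw [hmain]
    apply IsSelfAdjoint.smul
    · exact Complex.conj_ofReal _
    · rw [ContinuousLinearMap.isSelfAdjoint_iff']
      rw [ContinuousLinearMap.adjoint_comp, ContinuousLinearMap.adjoint_adjoint]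
  · intro φ
    have := key φ φ
    rw [← ContinuousLinearMap.sub_apply] at this
    rw [this]
    rw [Complex.re_ofReal_mul]
    have h2 : 0 ≤ (inner ℂ (B φ) (B φ) : ℂ).re := by
      simpa using (inner_self_nonneg : 0 ≤ RCLike.re (inner ℂ (B φ) (B φ) : ℂ))
    nlinarith
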